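/- For u = (u_1,…,u_n) ∈ ℝⁿ set D(u) = Σ_{k=1}^n e^{−u_k}, define ψ_ii(u) = 2e^{−u_i}/D(u) − 1 and ψ_ij(u) = 2e^{−(u_i+u_j)/2}/D(u) for i ≠ j, and define Ω_ij(u) = u_i·δ_ij + 4e^{−(u_i+u_j)/2}/D(u). Then for all indices i, j, k one has ∂Ω_ij/∂u_k = ψ_ki(u)·ψ_kj(u); that is, dΩ_ij = Σ_{k=1}^n ψ_ki ψ_kj du_k, so Ω is the matrix of second derivatives of the corresponding WDVV potential. -/

import Mathlib

/-- With `D(u) = ∑ₖ e^{-uₖ}`, `ψ_ii = 2e^{-uᵢ}/D - 1`,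
`ψ_ij = 2e^{-(uᵢ+uⱼ)/2}/D` for `i ≠ j`, and
`Ω_ij = uᵢ δ_ij + 4 e^{-(uᵢ+uⱼ)/2}/D`, one has `∂Ω_ij/∂uₖ = ψ_ki ψ_kj` for all
`i, j, k`; i.e. `dΩ_ij = ∑ₖ ψ_ki ψ_kj duₖ`, so `Ω` is the matrix of second
derivatives of the corresponding WDVV potential. -/
theorem stmt17 {n : ℕ} (ψ Ω : (Fin n → ℝ) → Fin n → Fin n → ℝ)
    (hψ : ∀ u : Fin n → ℝ, ∀ i j : Fin n,
      ψ u i j =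
        if i = j then 2 * Real.exp (-u i) / (∑ k, Real.exp (-u k)) - 1
        else 2 * Real.exp (-(u i + u j) / 2) / ∑ k, Real.exp (-u k))
    (hΩ : ∀ u : Fin n → ℝ, ∀ i j : Fin n,
      Ω u i j = u i * (if i = j then 1 else 0)
        + 4 * Real.exp (-(u i + u j) / 2) / ∑ k, Real.exp (-u k)) :
    ∀ u : Fin n → ℝ, ∀ i j k : Fin n,
      HasDerivAt (fun t : ℝ => Ω (Function.update u k t) i j)
        (ψ u k i * ψ u k j) (u k) := by
  intro u i j k
  set C : ℝ := ∑ l ∈ Finset.univ.erase k, Real.exp (-u l) with hC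
  have hCnn : 0 ≤ C := Finset.sum_nonneg fun _ _ => (Real.exp_pos _).le
  have hsum : ∀ t : ℝ, (∑ l, Real.exp (-(Function.update u k t l)))
      = Real.exp (-t) + C := by
    intro t
    have h1 : (fun l => Real.exp (-(Function.update u k t l)))
        = Function.update (fun l => Real.exp (-u l)) k (Real.exp (-t)) := by
      funext l
      by_cases h : l = k <;> simp [Function.update, h]
    rw [h1, Finset.sum_update_of_mem (Finset.mem_univ k), hC, Finset.erase_eq]
  have hsumD : (∑ l, Real.exp (-u l)) = Real.exp (-u k) + C := by
    have := hsum (u k); rwa [Function.update_eq_self] at this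
  set α : ℝ := -((if i = k then (1:ℝ) else 0) + if j = k then (1:ℝ) else 0) / 2
    with hα
  set β : ℝ := -((if i = k then (0:ℝ) else u i) + if j = k then (0:ℝ) else u j) / 2
    with hβ
  have harg : ∀ t : ℝ,
      -((if i = k then t else u i) + (if j = k then t else u j)) / 2
        = α * t + β := by
    intro t
    by_cases h1 : i = k <;> by_cases h2 : j = k <;>
      simp only [hα, hβ, if_pos, if_neg, h1, h2, if_true, if_false] <;> ring
  have hfe : (fun t : ℝ => Ω (Function.update u k t) i j)
      = fun t : ℝ => (if i = k then t else u i) * (if i = j then (1:ℝ) else 0)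
        + 4 * Real.exp (α * t + β) / (Real.exp (-t) + C) := by
    funext t
    rw [hΩ, hsum t]
    simp only [Function.update_apply]
    rw [harg t]
  rw [hfe]
  have hden : ∀ t : ℝ, Real.exp (-t) + C ≠ 0 := fun t => (add_pos_of_pos_of_nonneg (Real.exp_pos _) hCnn).ne'
  have hD : HasDerivAt (fun t : ℝ => Real.exp (-t) + C)
      (Real.exp (-u k) * (-1)) (u k) := ((hasDerivAt_neg (u k)).exp).add_const C
  have h1 : HasDerivAt (fun t : ℝ => α * t + β) α (u k) := by
    simpa using (((hasDerivAt_id (u k)).const_mul α).add_const β)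
  have hN : HasDerivAt (fun t : ℝ => 4 * Real.exp (α * t + β))
      (4 * (Real.exp (α * u k + β) * α)) (u k) := (h1.exp).const_mul 4
  have hg := hN.div hD (hden (u k))
  have hlin : HasDerivAt
      (fun t : ℝ => (if i = k then t else u i) * (if i = j then (1:ℝ) else 0))
      ((if i = k then (1:ℝ) else 0) * (if i = j then (1:ℝ) else 0)) (u k) := by
    by_cases h : i = k
    · simp only [h, if_true, if_pos rfl]
      exact (hasDerivAt_id (u k)).mul_const _
    · simp only [if_neg h, zero_mul]
      exact hasDerivAt_const _ _
  have key := hlin.add hg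
  refine HasDerivAt.congr_deriv key (Eq.symm ?_)
  have hDD := hden (u k)
  by_cases h1 : i = k <;> by_cases h2 : j = k
  · -- i = k, j = k
    subst h1; subst h2
    simp only [hψ, hα, hβ, hsumD, if_pos rfl]
    norm_num
    field_simp
    ring
  · -- i = k, j ≠ k
    subst h1
    have hij : ¬ i = j := fun h => h2 h.symm
    simp only [hψ, hα, hβ, hsumD, if_pos rfl, if_neg h2, if_neg hij,
      if_neg (fun h : i = j => h2 h.symm)]
    norm_num
    field_simp
    ring
  · -- i ≠ k, j = k
    subst h2
    have hij : ¬ j = i := fun h => h1 h.symm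
    simp only [hψ, hα, hβ, hsumD, if_neg h1, if_pos rfl, if_neg hij,
      if_neg (fun h : j = i => h1 h.symm)]
    norm_num
    field_simp
    ring
  · -- i ≠ k, j ≠ k
    have hk1 : ¬ k = i := fun h => h1 h.symm
    have hk2 : ¬ k = j := fun h => h2 h.symm
    simp only [hψ, hα, hβ, hsumD, if_neg h1, if_neg h2, if_neg hk1, if_neg hk2]
    norm_num
    have hmul : Real.exp ((-u i + -u k) / 2) * Real.exp ((-u j + -u k) / 2)
        = Real.exp ((-u j + -u i) / 2) * Real.exp (-u k) := by
      rw [← Real.exp_add, ← Real.exp_add]; congr 1; ring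
    field_simp
    linear_combination 4 * hmul
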